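/- arXiv:1803.05256 — 2 statements merged into one kernel-verified Lean document; each statement's English description precedes it below -/
import Mathlib

section
/- Consider minimizing f(x) + δ_C(Ax) where f ∈ C² is μ_f-strongly convex and C = {z ∈ ℝ^m : z ≤ b}. Let (x⋆, y⋆) be a primal-dual solution with active set J = {i : (Ax⋆)_i = b_i} satisfying strict complementarity ((y⋆)_i > 0 for all i ∈ J). Partition H = ∇²f(x⋆)^{-1} and A accordingly. Then the Jacobian of the residual R_γ at y⋆ exists and equals the block matrix [[A_J H_{JJ} A_Jᵀ, A_J H_{J\bar J} A_{\bar J}ᵀ], [0, (1/γ) I]]; in particular it is nonsingular if and only if A_J has full row rank (LICQ). -/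
open scoped InnerProductSpace RealInnerProductSpace
open Filter Topology

noncomputable section

abbrev E (n : ℕ) := EuclideanSpace ℝ (Fin n)

/-- Convexity for extended-real-valued functions. -/
def EConvexOn {n : ℕ} (f : E n → EReal) : Prop :=
  ∀ x y : E n, ∀ a b : ℝ, 0 ≤ a → 0 ≤ b → a + b = 1 →
    f (a • x + b • y) ≤ (a : EReal) * f x + (b : EReal) * f y

def ProperFun {n : ℕ} (f : E n → EReal) : Prop :=
  (∃ x, f x ≠ ⊤) ∧ ∀ x, f x ≠ ⊥

def ProperClosedConvex {n : ℕ} (f : E n → EReal) : Prop :=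
  ProperFun f ∧ LowerSemicontinuous f ∧ EConvexOn f

/-- `f` is strongly convex with modulus `μ`: `f - (μ/2)‖·‖²` is convex. -/
def StronglyConvexWithMod {n : ℕ} (μ : ℝ) (f : E n → EReal) : Prop :=
  EConvexOn (fun x => f x - ((μ / 2 * ‖x‖ ^ 2 : ℝ) : EReal))

/-- Fenchel conjugate. -/
def conjFn {n : ℕ} (f : E n → EReal) (y : E n) : EReal :=
  ⨆ x : E n, ((⟪x, y⟫_ℝ : ℝ) : EReal) - f x

/-- Convex subdifferential. -/
def Subdiff {n : ℕ} (f : E n → EReal) (x : E n) : Set (E n) :=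
  {v | ∀ z, f x + ((⟪v, z - x⟫_ℝ : ℝ) : EReal) ≤ f z}

/-- `p` is the proximal point of `x` for `h` with stepsize `γ`. -/
def IsProx {n : ℕ} (γ : ℝ) (h : E n → EReal) (x p : E n) : Prop :=
  ∀ z : E n, h p + ((1 / (2 * γ) * ‖p - x‖ ^ 2 : ℝ) : EReal) ≤
    h z + ((1 / (2 * γ) * ‖z - x‖ ^ 2 : ℝ) : EReal)

/-- Moreau envelope. -/
def moreauEnv {n : ℕ} (γ : ℝ) (h : E n → EReal) (x : E n) : EReal :=
  ⨅ z : E n, h z + ((1 / (2 * γ) * ‖z - x‖ ^ 2 : ℝ) : EReal)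

/-- Dual objective `ψ(y) = f*(-Aᵀy) + g*(y)`. -/
def dualObj {n m : ℕ} (f : E n → EReal) (g : E m → EReal) (A : E n →L[ℝ] E m)
    (y : E m) : EReal :=
  conjFn f (-(ContinuousLinearMap.adjoint A y)) + conjFn g y

/-- The alternating minimization envelope `ψ_γ(y) = -L_γ(x(y), z_γ(y), y)`. -/
def AME {n m : ℕ} (f : E n → EReal) (g : E m → EReal) (A : E n →L[ℝ] E m)
    (γ : ℝ) (xmin : E m → E n) (zmin : E m → E m) (y : E m) : EReal :=
  -(f (xmin y) + g (zmin y)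
    + ((⟪y, A (xmin y) - zmin y⟫_ℝ + γ / 2 * ‖A (xmin y) - zmin y‖ ^ 2 : ℝ) : EReal))


open Classical in
/-- Coordinate projection onto the coordinates in `J`. -/
def coordProj {m : ℕ} (J : Set (Fin m)) : E m →ₗ[ℝ] E m where
  toFun y := (WithLp.toLp 2 (fun i => if i ∈ J then y i else 0) : EuclideanSpace ℝ (Fin m))
  map_add' x y := by
    ext i; by_cases h : i ∈ J <;> simp [h]
  map_smul' c x := by
    ext i; by_cases h : i ∈ J <;> simp [h]
/-- First-order condition for convex functions. -/
lemma convex_first_order {n : ℕ} {φ : E n → ℝ} (hφ : ConvexOn ℝ Set.univ φ)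
    {u : E n} {φ' : E n →L[ℝ] ℝ} (hd : HasFDerivAt φ φ' u) (x : E n) :
    φ u + φ' (x - u) ≤ φ x := by
  set d := x - u with hdd
  have hline : HasDerivAt (fun t : ℝ => u + t • d) d 0 := by
    simpa using ((hasDerivAt_id (0:ℝ)).smul_const d).const_add u
  have hd' : HasFDerivAt φ φ' (u + (0:ℝ) • d) := by simpa using hd
  have hcomp : HasDerivAt (fun t : ℝ => φ (u + t • d)) (φ' d) 0 := by
    exact hd'.comp_hasDerivAt (x := (0:ℝ)) hline
  have hmono : Tendsto (slope (fun t : ℝ => φ (u + t • d)) 0) (𝓝[>] (0:ℝ)) (𝓝 (φ' d)) :=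
    (hasDerivAt_iff_tendsto_slope.mp hcomp).mono_left
      (nhdsWithin_mono _ (fun t ht => ne_of_gt ht))
  have hev : ∀ᶠ t in 𝓝[>] (0:ℝ), slope (fun t : ℝ => φ (u + t • d)) 0 t ≤ φ x - φ u := by
    filter_upwards [Ioc_mem_nhdsGT (zero_lt_one)] with t ht
    have hcvx := hφ.2 (Set.mem_univ u) (Set.mem_univ x) (by linarith [ht.2] : (0:ℝ) ≤ 1 - t)
      (le_of_lt ht.1) (by ring)
    have hpt : (1 - t) • u + t • x = u + t • d := by rw [hdd]; module
    rw [hpt] at hcvx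
    simp only [smul_eq_mul] at hcvx
    rw [slope_def_field]
    simp only [zero_smul, add_zero, sub_zero]
    rw [div_le_iff₀ ht.1]
    nlinarith
  have := le_of_tendsto hmono hev
  linarith

/-- A critical point of a convex function is a global minimum. -/
lemma convex_isMin {n : ℕ} {φ : E n → ℝ} (hφ : ConvexOn ℝ Set.univ φ)
    {u : E n} (hd : HasFDerivAt φ (0 : E n →L[ℝ] ℝ) u) (x : E n) : φ u ≤ φ x := by
  simpa using convex_first_order hφ hd x

/-- Uniqueness of minimizers of strictly convex functions. -/
lemma strict_min_unique {n : ℕ} {φ : E n → ℝ} (h : StrictConvexOn ℝ Set.univ φ)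
    {p q : E n} (hp : ∀ x, φ p ≤ φ x) (hq : ∀ x, φ q ≤ φ x) : p = q := by
  by_contra hne
  have h2 := h.2 (Set.mem_univ p) (Set.mem_univ q) hne (by norm_num : (0:ℝ) < 1/2)
    (by norm_num : (0:ℝ) < 1/2) (by norm_num)
  have hqp : φ q = φ p := le_antisymm (hq p) (hp q)
  have := hp ((1/2 : ℝ) • p + (1/2 : ℝ) • q)
  rw [hqp] at h2
  simp only [smul_eq_mul] at h2
  linarith
lemma grad_strong_mono {n : ℕ} {μ : ℝ} {f : E n → ℝ} (hC2 : ContDiff ℝ 2 f)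
    (hsc : StrongConvexOn Set.univ μ f) (z w : E n) :
    μ * ‖z - w‖ ^ 2 ≤ ⟪gradient f z - gradient f w, z - w⟫_ℝ := by
  have hdiff : Differentiable ℝ f := hC2.differentiable (by norm_num)
  have hconv : ConvexOn ℝ Set.univ (fun z : E n => f z - μ / 2 * ‖z‖ ^ 2) :=
    strongConvexOn_iff_convex.mp hsc
  have hD : ∀ p : E n, HasFDerivAt (fun z : E n => f z - μ / 2 * ‖z‖ ^ 2)
      ((InnerProductSpace.toDual ℝ (E n)) (gradient f p) - μ • (innerSL ℝ p)) p := by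
    intro p
    have h1 : HasFDerivAt f ((InnerProductSpace.toDual ℝ (E n)) (gradient f p)) p :=
      (hdiff p).hasGradientAt.hasFDerivAt
    have h2 : HasFDerivAt (fun z : E n => μ / 2 * ‖z‖ ^ 2)
        ((μ/2) • (2 • (innerSL ℝ p))) p :=
      ((hasStrictFDerivAt_norm_sq p).hasFDerivAt).const_mul (μ/2)
    have he : ((μ/2) • (2 • (innerSL ℝ p)) : E n →L[ℝ] ℝ) = μ • (innerSL ℝ p) := by
      ext y; simp; ring
    exact h1.sub (he ▸ h2)
  have key : ∀ p q : E n,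
      (f p - μ / 2 * ‖p‖ ^ 2) + (⟪gradient f p, q - p⟫_ℝ - μ * ⟪p, q - p⟫_ℝ)
        ≤ f q - μ / 2 * ‖q‖ ^ 2 := by
    intro p q
    have := convex_first_order hconv (hD p) q
    simpa [InnerProductSpace.toDual_apply_apply] using this
  have h1 := key z w
  have h2 := key w z
  have e1 : ⟪gradient f z - gradient f w, z - w⟫_ℝ
      = ⟪gradient f z, z - w⟫_ℝ - ⟪gradient f w, z - w⟫_ℝ := inner_sub_left _ _ _
  have e2 : ⟪gradient f z, w - z⟫_ℝ = -⟪gradient f z, z - w⟫_ℝ := by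
    rw [← inner_neg_right]; congr 1; abel
  have e3 : ⟪gradient f w, z - w⟫_ℝ = -⟪gradient f w, w - z⟫_ℝ := by
    rw [← inner_neg_right]; congr 1; abel
  have e4 : ⟪z, w - z⟫_ℝ + ⟪w, z - w⟫_ℝ = -‖z - w‖^2 := by
    have h5 : ⟪z, w - z⟫_ℝ + ⟪w, z - w⟫_ℝ = -⟪z - w, z - w⟫_ℝ := by
      simp only [inner_sub_left, inner_sub_right]
      rw [real_inner_comm w z]; ring
    rw [h5, real_inner_self_eq_norm_sq]
  have e4' : μ * ⟪z, w - z⟫_ℝ + μ * ⟪w, z - w⟫_ℝ = -(μ * ‖z - w‖^2) := by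
    rw [← mul_add, e4]; ring
  linarith [h1, h2, e1, e2, e4']

lemma hessian_lower {n : ℕ} {μ : ℝ} {f : E n → ℝ} (hC2 : ContDiff ℝ 2 f)
    (hsc : StrongConvexOn Set.univ μ f) {x : E n} {Hf : E n →L[ℝ] E n}
    (hHf : HasFDerivAt (gradient f) Hf x) (v : E n) : μ * ‖v‖ ^ 2 ≤ ⟪v, Hf v⟫_ℝ := by
  have hline : HasDerivAt (fun t : ℝ => x + t • v) v 0 := by
    simpa using ((hasDerivAt_id (0:ℝ)).smul_const v).const_add x
  have hHf' : HasFDerivAt (gradient f) Hf (x + (0:ℝ) • v) := by simpa using hHf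
  have hgrad : HasDerivAt (fun t : ℝ => gradient f (x + t • v)) (Hf v) 0 := by
    exact hHf'.comp_hasDerivAt (x := (0:ℝ)) hline
  have hφ : HasDerivAt (fun t : ℝ => ⟪v, gradient f (x + t • v)⟫_ℝ) (⟪v, Hf v⟫_ℝ) 0 := by
    have := (hasDerivAt_const (0:ℝ) v).inner ℝ hgrad
    simpa using this
  have hmono : Tendsto (slope (fun t : ℝ => ⟪v, gradient f (x + t • v)⟫_ℝ) 0)
      (𝓝[>] (0:ℝ)) (𝓝 (⟪v, Hf v⟫_ℝ)) :=
    (hasDerivAt_iff_tendsto_slope.mp hφ).mono_left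
      (nhdsWithin_mono _ (fun t ht => ne_of_gt ht))
  refine ge_of_tendsto hmono ?_
  filter_upwards [self_mem_nhdsWithin] with t (ht : 0 < t)
  have hm := grad_strong_mono hC2 hsc (x + t • v) x
  have he : x + t • v - x = t • v := by abel
  rw [he] at hm
  rw [norm_smul] at hm
  have hinner : ⟪gradient f (x + t • v) - gradient f x, t • v⟫_ℝ
      = t * ⟪gradient f (x + t • v) - gradient f x, v⟫_ℝ := real_inner_smul_right _ _ _
  rw [hinner] at hm
  rw [slope_def_field]
  simp only [zero_smul, add_zero, sub_zero]
  rw [le_div_iff₀ ht]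
  have habs : |t| = t := abs_of_pos ht
  simp only [Real.norm_eq_abs, habs] at hm
  have hsub : ⟪v, gradient f (x + t • v)⟫_ℝ - ⟪v, gradient f x⟫_ℝ
      = ⟪gradient f (x + t • v) - gradient f x, v⟫_ℝ := by
    rw [inner_sub_left, real_inner_comm v, real_inner_comm v]
  rw [hsub]
  nlinarith
lemma proj_box {m : ℕ} (b : E m) (C : Set (E m)) (hC : C = {z : E m | ∀ i, z i ≤ b i})
    (projC : E m → E m) (hproj : ∀ w, projC w ∈ C ∧ ∀ z ∈ C, ‖projC w - w‖ ≤ ‖z - w‖)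
    (w : E m) : projC w = (WithLp.toLp 2 (fun i => min (w i) (b i)) : EuclideanSpace ℝ (Fin m)) := by
  set q : E m := (WithLp.toLp 2 (fun i => min (w i) (b i)) : EuclideanSpace ℝ (Fin m)) with hq
  have hqC : q ∈ C := by rw [hC]; intro i; exact min_le_right _ _
  have hqopt : ∀ z ∈ C, ‖q - w‖ ≤ ‖z - w‖ := by
    intro z hz
    rw [hC] at hz
    have hcoord : ∀ i, ((q - w : E m) i) ^ 2 ≤ ((z - w : E m) i) ^ 2 := by
      intro i
      simp only [PiLp.sub_apply]
      by_cases h : w i ≤ b i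
      · have hqi : q i = w i := min_eq_left h
        rw [hqi]
        simpa using sq_nonneg (z i - w i)
      · push_neg at h
        have hqi : q i = b i := min_eq_right (le_of_lt h)
        rw [hqi]
        have h1 : z i ≤ b i := hz i
        nlinarith
    rw [EuclideanSpace.norm_eq, EuclideanSpace.norm_eq]
    apply Real.sqrt_le_sqrt
    apply Finset.sum_le_sum
    intro i _
    simpa [sq_abs] using hcoord i
  set p : E m := projC w with hp
  have hpC : p ∈ C := (hproj w).1
  have h1 : ‖p - w‖ ≤ ‖q - w‖ := (hproj w).2 q hqC
  have h2 : ‖q - w‖ ≤ ‖p - w‖ := hqopt p hpC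
  have heq : ‖p - w‖ = ‖q - w‖ := le_antisymm h1 h2
  set mid : E m := (2⁻¹ : ℝ) • (p + q) with hmid
  have hmidC : mid ∈ C := by
    rw [hC]; intro i
    rw [hC] at hpC hqC
    have := hpC i; have := hqC i
    simp only [hmid, PiLp.smul_apply, PiLp.add_apply, smul_eq_mul]
    linarith
  have h3 : ‖p - w‖ ≤ ‖mid - w‖ := (hproj w).2 mid hmidC
  have hpar := parallelogram_law_with_norm ℝ (p - w) (q - w)
  have ha : p - w + (q - w) = (2:ℝ) • (mid - w) := by rw [hmid]; module
  have hb : p - w - (q - w) = p - q := by abel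
  rw [ha, hb] at hpar
  rw [norm_smul] at hpar
  simp only [Real.norm_ofNat] at hpar
  have hnz : ‖p - q‖ ^ 2 ≤ 0 := by nlinarith [norm_nonneg (p - q), norm_nonneg (mid - w), norm_nonneg (p-w)]
  have : ‖p - q‖ = 0 := by nlinarith [norm_nonneg (p - q)]
  have := norm_eq_zero.mp this
  have : p = q := sub_eq_zero.mp this
  rw [hp] at this; exact this
set_option maxHeartbeats 1000000

/-- For a C² strongly convex `f` minimized subject to `Ax ≤ b`, under strict
complementarity the fixed-point residual `R_γ(y) = z_γ(y) - A x(y)` is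
differentiable at the dual solution `y⋆`, its Jacobian is the block matrix
`[[A_J H A_Jᵀ, A_J H A_{J̄}ᵀ], [0, γ⁻¹ I]]` (with `H = ∇²f(x⋆)⁻¹`), and it is
nonsingular iff the active rows `A_J` have full row rank (LICQ). -/
theorem jacobian_residual_polyhedral
    {n m : ℕ} (μ γ : ℝ) (hμ : 0 < μ) (hγ : 0 < γ)
    (f : E n → ℝ) (A : E n →L[ℝ] E m) (b : E m)
    (hC2 : ContDiff ℝ 2 f) (hsc : StrongConvexOn Set.univ μ f)
    (C : Set (E m)) (hC : C = {z : E m | ∀ i, z i ≤ b i})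
    (xstar : E n) (ystar : E m)
    (J : Set (Fin m)) (hJ : J = {i : Fin m | A xstar i = b i})
    -- primal-dual optimality (KKT) with strict complementarity
    (hfeas : A xstar ∈ C)
    (hstat : gradient f xstar = -(ContinuousLinearMap.adjoint A ystar))
    (hsign : ∀ i, 0 ≤ ystar i)
    (hcompl : ∀ i, A xstar i < b i → ystar i = 0)
    (hstrict : ∀ i, i ∈ J → 0 < ystar i)
    -- the Hessian of f at x⋆ and its inverse
    (Hf Hinv : E n →L[ℝ] E n)
    (hHf : HasFDerivAt (gradient f) Hf xstar)
    (hinv1 : Hf.comp Hinv = ContinuousLinearMap.id ℝ (E n))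
    (hinv2 : Hinv.comp Hf = ContinuousLinearMap.id ℝ (E n))
    -- the alternating minimization maps
    (xmin : E m → E n)
    (hx : ∀ y x, f (xmin y) + ⟪y, A (xmin y)⟫_ℝ ≤ f x + ⟪y, A x⟫_ℝ)
    (projC : E m → E m)
    (hproj : ∀ w, projC w ∈ C ∧ ∀ z ∈ C, ‖projC w - w‖ ≤ ‖z - w‖)
    -- the residual and the claimed Jacobian
    (R : E m → E m)
    (hR : ∀ y, R y = projC ((1 / γ) • y + A (xmin y)) - A (xmin y))
    (P M : E m →L[ℝ] E m)
    (hP : P = LinearMap.toContinuousLinearMap (coordProj J))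
    (hM : M = P.comp (A.comp (Hinv.comp (ContinuousLinearMap.adjoint A)))
        + (1 / γ) • (ContinuousLinearMap.id ℝ (E m) - P)) :
    HasFDerivAt R M ystar ∧
    (Function.Bijective M ↔
      Set.range (fun x : E n => P (A x)) = {z : E m | ∀ i ∉ J, z i = 0}) := by
  classical
  set At := ContinuousLinearMap.adjoint A with hAt
  have key : ∀ (w : E m) (x : E n), ⟪At w, x⟫_ℝ = ⟪w, A x⟫_ℝ := fun w x => by
    rw [hAt]; exact ContinuousLinearMap.adjoint_inner_left A x w
  -- convexity facts
  have hf_conv : ConvexOn ℝ Set.univ f := hsc.convexOn (by intro r; positivity)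
  have hf_strict : StrictConvexOn ℝ Set.univ f := hsc.strictConvexOn hμ
  have hdiff : Differentiable ℝ f := hC2.differentiable (by norm_num)
  have hlin_conv : ∀ y : E m, ConvexOn ℝ Set.univ (fun x : E n => ⟪y, A x⟫_ℝ) := by
    intro y
    refine ⟨convex_univ, ?_⟩
    intro x _ z _ a c ha hc hac
    apply le_of_eq
    simp [map_add, map_smul, inner_add_right, inner_smul_right]
  have hφconv : ∀ y : E m, ConvexOn ℝ Set.univ (fun x : E n => f x + ⟪y, A x⟫_ℝ) :=
    fun y => hf_conv.add (hlin_conv y)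
  have hφstrict : ∀ y : E m, StrictConvexOn ℝ Set.univ (fun x : E n => f x + ⟪y, A x⟫_ℝ) :=
    fun y => hf_strict.add_convexOn (hlin_conv y)
  -- a critical point is a global minimum
  have hcrit_min : ∀ (y : E m) (u : E n), gradient f u = -(At y) →
      ∀ x, f u + ⟪y, A u⟫_ℝ ≤ f x + ⟪y, A x⟫_ℝ := by
    intro y u hu x
    have hF : HasFDerivAt (fun x : E n => f x + ⟪y, A x⟫_ℝ) (0 : E n →L[ℝ] ℝ) u := by
      have h1 : HasFDerivAt f ((InnerProductSpace.toDual ℝ (E n)) (gradient f u)) u :=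
        (hdiff u).hasGradientAt.hasFDerivAt
      have h2 : HasFDerivAt (fun x : E n => ⟪y, A x⟫_ℝ)
          (((InnerProductSpace.toDual ℝ (E n)) (At y) : E n →L[ℝ] ℝ)) u := by
        have := (((InnerProductSpace.toDual ℝ (E n)) (At y) : E n →L[ℝ] ℝ)).hasFDerivAt (x := u)
        apply this.congr_of_eventuallyEq
        filter_upwards with x
        rw [InnerProductSpace.toDual_apply_apply, hAt, ContinuousLinearMap.adjoint_inner_left]
      have h3 := h1.add h2
      have he : ((InnerProductSpace.toDual ℝ (E n)) (gradient f u)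
          + ((InnerProductSpace.toDual ℝ (E n)) (At y) : E n →L[ℝ] ℝ) : E n →L[ℝ] ℝ) = 0 := by
        refine ContinuousLinearMap.ext fun v => ?_
        simp [hu, InnerProductSpace.toDual_apply_apply, ContinuousLinearMap.adjoint_inner_left,
          inner_neg_left]
      rwa [he] at h3
    exact convex_isMin (hφconv y) hF x
  have hxmin_star : xmin ystar = xstar :=
    strict_min_unique (hφstrict ystar) (hx ystar) (hcrit_min ystar xstar hstat)
  -- the gradient is C¹ with strict derivative Hf at xstar
  have hgradC1 : ContDiff ℝ 1 (gradient f) := by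
    have h1 : ContDiff ℝ 1 (fderiv ℝ f) := hC2.fderiv_right (by norm_num)
    exact (InnerProductSpace.toDual ℝ (E n)).symm.contDiff.comp h1
  have hstrictD : HasStrictFDerivAt (gradient f) Hf xstar := by
    have h := (hgradC1.contDiffAt (x := xstar)).hasStrictFDerivAt one_ne_zero
    rwa [hHf.fderiv] at h
  -- local inverse of the gradient
  have hlinv : ∀ x, Hinv (Hf x) = x := by
    intro x
    have := ContinuousLinearMap.ext_iff.mp hinv2 x
    simpa using this
  have hrinv : ∀ x, Hf (Hinv x) = x := by
    intro x
    have := ContinuousLinearMap.ext_iff.mp hinv1 x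
    simpa using this
  set Hfe : E n ≃L[ℝ] E n := ContinuousLinearEquiv.equivOfInverse Hf Hinv hlinv hrinv with hHfe0
  have hHfe : (Hfe : E n →L[ℝ] E n) = Hf := by
    ext x; simp [hHfe0, ContinuousLinearEquiv.equivOfInverse_apply]
  have hHfesymm : (Hfe.symm : E n →L[ℝ] E n) = Hinv := by
    refine ContinuousLinearMap.ext fun x => ?_
    show Hfe.symm x = Hinv x
    rw [ContinuousLinearEquiv.symm_apply_eq]
    simp [hHfe0, ContinuousLinearEquiv.equivOfInverse_apply, hrinv]
  have hS : HasStrictFDerivAt (gradient f) (Hfe : E n →L[ℝ] E n) xstar := by rw [hHfe]; exact hstrictD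
  set g : E n → E n := hS.localInverse (gradient f) _ xstar with hg0
  have hgstrict : HasStrictFDerivAt g (Hfe.symm : E n →L[ℝ] E n) (gradient f xstar) := hS.to_localInverse
  set T : E m → E n := fun y => -(At y) with hT0
  have hT : Filter.Tendsto T (𝓝 ystar) (𝓝 (gradient f xstar)) := by
    have hc : ContinuousAt T ystar := (At.continuous.neg).continuousAt
    have : T ystar = gradient f xstar := by rw [hstat]
    rw [← this]
    exact hc
  have hevt : ∀ᶠ y in 𝓝 ystar, gradient f (g (T y)) = T y := hT.eventually hS.eventually_right_inverse
  have hxg : xmin =ᶠ[𝓝 ystar] fun y => g (T y) := by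
    filter_upwards [hevt] with y hy
    exact strict_min_unique (hφstrict y) (hx y) (hcrit_min y (g (T y)) hy)
  set D : E m →L[ℝ] E n := Hinv.comp (-At) with hD0
  have hxminD : HasFDerivAt xmin D ystar := by
    have h1 : HasFDerivAt T (-At) ystar := ((At.hasFDerivAt (x := ystar))).neg
    have h2 : HasFDerivAt g Hinv (T ystar) := by
      have : T ystar = gradient f xstar := by rw [hstat]
      rw [this, ← hHfesymm]
      exact hgstrict.hasFDerivAt
    exact (h2.comp ystar h1).congr_of_eventuallyEq hxg
  -- coordinate description of P
  have hPap : ∀ (z : E m) (i : Fin m), P z i = if i ∈ J then z i else 0 := by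
    intro z i; rw [hP]; rfl
  -- the projection formula
  have hprojf := proj_box b C hC projC hproj
  -- the point around which we linearize
  set W : E m → E m := fun y => (1 / γ) • y + A (xmin y) with hW0
  have hWc : ContinuousAt W ystar := by
    apply ContinuousAt.add
    · exact (continuousAt_id.const_smul (1 / γ))
    · exact A.continuous.continuousAt.comp hxminD.continuousAt
  have hfeas' : ∀ i, A xstar i ≤ b i := by
    rw [hC] at hfeas; exact hfeas
  have hev2 : ∀ᶠ y in 𝓝 ystar, ∀ i : Fin m,
      (i ∈ J → b i < W y i) ∧ (i ∉ J → W y i < b i) := by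
    rw [eventually_all]
    intro i
    have hWci : ContinuousAt (fun y => W y i) ystar :=
      ((EuclideanSpace.proj i).continuous.continuousAt).comp hWc
    by_cases hi : i ∈ J
    · have hlt : b i < W ystar i := by
        have hbi : A xstar i = b i := by rw [hJ] at hi; exact hi
        have hyi : 0 < ystar i := hstrict i hi
        simp only [hW0, PiLp.add_apply, PiLp.smul_apply, smul_eq_mul, hxmin_star, hbi]
        have : 0 < 1 / γ * ystar i := by positivity
        linarith
      have := continuousAt_const.eventually_lt hWci hlt
      filter_upwards [this] with y hy
      exact ⟨fun _ => hy, fun hni => absurd hi hni⟩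
    · have hlt : W ystar i < b i := by
        have hbi : A xstar i < b i :=
          lt_of_le_of_ne (hfeas' i) (by rw [hJ] at hi; exact hi)
        have hyi : ystar i = 0 := hcompl i hbi
        simp only [hW0, PiLp.add_apply, PiLp.smul_apply, smul_eq_mul, hxmin_star, hyi]
        simpa using hbi
      have := hWci.eventually_lt continuousAt_const hlt
      filter_upwards [this] with y hy
      exact ⟨fun hmem => absurd hmem hi, fun _ => hy⟩
  set F : E m → E m := fun y => P ((b - A (xmin y) : E m)) + (1 / γ) • (y - P y) with hF0
  have hRF : R =ᶠ[𝓝 ystar] F := by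
    filter_upwards [hev2] with y hy
    rw [hR y, hprojf]
    refine PiLp.ext fun i => ?_
    show min (((1 / γ) • y + A (xmin y) : E m) i) (b i) - A (xmin y) i = (F y : E m) i
    have hWyi : (W y : E m) i = (((1 / γ) • y + A (xmin y) : E m) i) := rfl
    have hmm : (((1 / γ) • y + A (xmin y) : E m) i) = 1 / γ * y i + A (xmin y) i := by
      simp [PiLp.add_apply, PiLp.smul_apply]
    have hF1 : (F y : E m) i = (if i ∈ J then b i - A (xmin y) i else 0)
        + 1 / γ * (y i - (if i ∈ J then y i else 0)) := by
      simp only [hF0, PiLp.add_apply, PiLp.smul_apply, PiLp.sub_apply, smul_eq_mul, hPap]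
    rw [hF1]
    by_cases hi : i ∈ J
    · have hb : b i ≤ (((1 / γ) • y + A (xmin y) : E m) i) := by
        rw [← hWyi]; exact le_of_lt ((hy i).1 hi)
      rw [min_eq_right hb]
      simp [hi]
    · have hb : (((1 / γ) • y + A (xmin y) : E m) i) ≤ b i := by
        rw [← hWyi]; exact le_of_lt ((hy i).2 hi)
      rw [min_eq_left hb, hmm]
      simp only [hi, if_false]
      ring
  have hFD : HasFDerivAt F M ystar := by
    have h1 : HasFDerivAt (fun y => A (xmin y)) (A.comp D) ystar :=
      (A.hasFDerivAt).comp ystar hxminD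
    have h2 : HasFDerivAt (fun y => (b - A (xmin y) : E m)) (-(A.comp D)) ystar :=
      h1.const_sub b
    have h3 : HasFDerivAt (fun y => P ((b - A (xmin y) : E m))) (P.comp (-(A.comp D))) ystar :=
      (P.hasFDerivAt).comp ystar h2
    have h4 : HasFDerivAt (fun y : E m => y - P y) (ContinuousLinearMap.id ℝ (E m) - P) ystar :=
      (hasFDerivAt_id ystar).sub P.hasFDerivAt
    have h5 := h4.const_smul (1 / γ)
    have h6 := h3.add h5
    have hMeq : M = P.comp (-(A.comp D)) + (1 / γ) • (ContinuousLinearMap.id ℝ (E m) - P) := by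
      rw [hM]
      congr 1
      refine ContinuousLinearMap.ext fun z => ?_
      simp only [ContinuousLinearMap.comp_apply, ContinuousLinearMap.neg_apply, hD0,
        map_neg, neg_neg]
    rw [hMeq]
    exact h6
  have hRD : HasFDerivAt R M ystar := hFD.congr_of_eventuallyEq hRF
  refine ⟨hRD, ?_⟩
  -- Part 2: bijectivity iff LICQ
  have hPsym : ∀ u v : E m, ⟪P u, v⟫_ℝ = ⟪u, P v⟫_ℝ := by
    intro u v
    rw [PiLp.inner_apply, PiLp.inner_apply]
    refine Finset.sum_congr rfl fun i _ => ?_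
    rw [hPap, hPap]
    by_cases hi : i ∈ J <;> simp [hi]
  have hMap : ∀ z : E m, M z = P (A (Hinv (At z))) + (1 / γ) • (z - P z) := by
    intro z
    rw [hM]
    simp [ContinuousLinearMap.add_apply, ContinuousLinearMap.comp_apply,
      ContinuousLinearMap.smul_apply, ContinuousLinearMap.sub_apply, hAt]
  have hPofK : ∀ z : E m, (∀ i ∉ J, z i = 0) → P z = z := by
    intro z hz
    refine PiLp.ext fun i => ?_
    rw [hPap]
    by_cases hi : i ∈ J
    · simp [hi]
    · simp [hi, hz i hi]
  have hposdef : ∀ v : E n, ⟪v, Hinv v⟫_ℝ = 0 → v = 0 := by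
    intro v hv
    have hu : Hf (Hinv v) = v := hrinv v
    have h1 : ⟪v, Hinv v⟫_ℝ = ⟪Hinv v, Hf (Hinv v)⟫_ℝ := by
      rw [hu, real_inner_comm]
    have h2 := hessian_lower hC2 hsc hHf (Hinv v)
    rw [← h1, hv] at h2
    have h3 : ‖Hinv v‖ ^ 2 ≤ 0 := by
      by_contra hcon
      push_neg at hcon
      nlinarith
    have h4 : Hinv v = 0 := by
      have := norm_nonneg (Hinv v)
      have : ‖Hinv v‖ = 0 := by nlinarith
      exact norm_eq_zero.mp this
    rw [← hu, h4, map_zero]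
  have hker : ∀ z : E m, M z = 0 ↔ ((∀ i ∉ J, z i = 0) ∧ At z = 0) := by
    intro z
    constructor
    · intro h
      have hz0 : ∀ i ∉ J, z i = 0 := by
        intro i hi
        have hcoord : (M z : E m) i = 0 := by rw [h]; rfl
        rw [hMap z] at hcoord
        have : (P (A (Hinv (At z))) : E m) i = 0 := by rw [hPap]; simp [hi]
        rw [PiLp.add_apply, this, PiLp.smul_apply, PiLp.sub_apply, hPap] at hcoord
        simp only [hi, if_false, sub_zero, smul_eq_mul, zero_add] at hcoord
        have hγ' : 1 / γ ≠ 0 := by positivity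
        exact (mul_eq_zero.mp hcoord).resolve_left hγ'
      have hPz : P z = z := hPofK z hz0
      have hinn : ⟪z, M z⟫_ℝ = 0 := by rw [h, inner_zero_right]
      rw [hMap z] at hinn
      rw [inner_add_right, hPz, sub_self, smul_zero, inner_zero_right, add_zero] at hinn
      rw [← hPsym, hPz] at hinn
      have : ⟪At z, Hinv (At z)⟫_ℝ = 0 := by rw [key]; exact hinn
      exact ⟨hz0, hposdef (At z) this⟩
    · rintro ⟨h1, h2⟩
      rw [hMap z, h2, map_zero, map_zero, map_zero, hPofK z h1, sub_self, smul_zero, add_zero]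
  have hinj_iff : Function.Injective (⇑M) ↔
      ∀ z : E m, (∀ i ∉ J, z i = 0) → At z = 0 → z = 0 := by
    constructor
    · intro h z h1 h2
      have : M z = 0 := (hker z).mpr ⟨h1, h2⟩
      apply h
      rw [this, map_zero]
    · intro h z1 z2 he
      have : M (z1 - z2) = 0 := by rw [map_sub, he, sub_self]
      obtain ⟨h1, h2⟩ := (hker _).mp this
      exact sub_eq_zero.mp (h _ h1 h2)
  have hbij_iff : Function.Bijective (⇑M) ↔ Function.Injective (⇑M) := by
    constructor
    · exact And.left
    · intro h
      refine ⟨h, ?_⟩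
      have hs := LinearMap.injective_iff_surjective (f := (M : E m →ₗ[ℝ] E m))
      exact hs.mp h
  rw [hbij_iff, hinj_iff]
  constructor
  · intro hcond
    apply Set.Subset.antisymm
    · rintro _ ⟨x, rfl⟩ i hi
      show (P (A x) : E m) i = 0
      rw [hPap]
      simp [hi]
    · intro z hz
      classical
      let K' : Submodule ℝ (E m) :=
        { carrier := {z : E m | ∀ i ∉ J, z i = 0}
          add_mem' := by
            intro a c ha hc i hi
            have : (a + c : E m) i = a i + c i := rfl
            rw [this, ha i hi, hc i hi, add_zero]
          zero_mem' := fun i _ => rfl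
          smul_mem' := by
            intro r a ha i hi
            have : (r • a : E m) i = r * a i := rfl
            rw [this, ha i hi, mul_zero] }
      set S : E m →L[ℝ] E m := P.comp (A.comp (At.comp P)) with hS0
      have hSmem : ∀ u ∈ K', (S : E m →ₗ[ℝ] E m) u ∈ K' := by
        intro u _ i hi
        show (S u : E m) i = 0
        rw [hS0]
        simp only [ContinuousLinearMap.comp_apply]
        rw [hPap]
        simp [hi]
      set T : K' →ₗ[ℝ] K' := LinearMap.restrict (S : E m →ₗ[ℝ] E m) hSmem with hT1
      have hTinj : Function.Injective T := by
        intro u v huv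
        have hvals : S u.val = S v.val := by
          have := congrArg Subtype.val huv
          simpa [hT1, LinearMap.restrict_apply] using this
        have hd : S (u.val - v.val) = 0 := by rw [map_sub, hvals, sub_self]
        have hdK : ∀ i ∉ J, (u.val - v.val : E m) i = 0 := by
          intro i hi
          have h1 : (u.val : E m) i = 0 := u.2 i hi
          have h2 : (v.val : E m) i = 0 := v.2 i hi
          show (u.val : E m) i - (v.val : E m) i = 0
          rw [h1, h2, sub_self]
        set d := u.val - v.val with hd0
        have hPd : P d = d := hPofK d hdK
        have hinn : ⟪d, S d⟫_ℝ = 0 := by rw [hd, inner_zero_right]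
        rw [hS0] at hinn
        simp only [ContinuousLinearMap.comp_apply] at hinn
        rw [← hPsym, hPd] at hinn
        have hnorm : ⟪At d, At d⟫_ℝ = 0 := by rw [key]; exact hinn
        have hAtd : At d = 0 := inner_self_eq_zero.mp hnorm
        have : d = 0 := hcond d hdK hAtd
        have : u.val = v.val := by rwa [hd0, sub_eq_zero] at this
        exact Subtype.ext this
      have hTsurj : Function.Surjective T := LinearMap.injective_iff_surjective.mp hTinj
      obtain ⟨u, hu⟩ := hTsurj ⟨z, hz⟩
      refine ⟨At (P u.val), ?_⟩
      have hval : S u.val = z := by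
        have := congrArg Subtype.val hu
        simpa [hT1, LinearMap.restrict_apply] using this
      rw [← hval, hS0]
      simp [ContinuousLinearMap.comp_apply]
  · intro hrange z h1 h2
    have hzmem : z ∈ Set.range (fun x : E n => P (A x)) := by
      rw [hrange]; exact h1
    obtain ⟨x, hxz⟩ := hzmem
    have hxz' : P (A x) = z := hxz
    have : ⟪z, z⟫_ℝ = 0 := by
      nth_rewrite 2 [← hxz']
      rw [← hPsym, hPofK z h1, ← key, h2, inner_zero_left]
    exact inner_self_eq_zero.mp this
end
end

section
/- Under the standing assumptions with 0 < γ < μ_f/‖A‖², suppose y⋆ is a strong local minimum of the dual objective ψ, i.e., there exist c, ε > 0 with ψ(y) - ψ(y⋆) ≥ (c/2)‖y - y⋆‖² for all ‖y - y⋆‖ ≤ ε. Then y⋆ is a strong local minimum of the envelope ψ_γ: there exist c', ε' > 0 with ψ_γ(y) - ψ_γ(y⋆) ≥ (c'/4)‖y - y⋆‖² for all ‖y - y⋆‖ ≤ ε'. -/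
open scoped InnerProductSpace RealInnerProductSpace
open Filter Topology

noncomputable section

lemma aux_limit {D Ec : ℝ} (hE : 0 ≤ Ec) (h : ∀ t : ℝ, 0 < t → t ≤ 1 → 0 ≤ D + Ec * t) :
    0 ≤ D := by
  rcases eq_or_lt_of_le hE with hE0 | hEpos
  · have := h 1 one_pos le_rfl; nlinarith
  · have key : ∀ δ : ℝ, 0 < δ → 0 ≤ D + δ := by
      intro δ hδ
      have ht1 : (0:ℝ) < min 1 (δ / Ec) := lt_min one_pos (by positivity)
      have := h _ ht1 (min_le_left _ _)
      have h2 : Ec * min 1 (δ / Ec) ≤ δ := by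
        calc Ec * min 1 (δ / Ec) ≤ Ec * (δ / Ec) :=
              mul_le_mul_of_nonneg_left (min_le_right _ _) hE
        _ = δ := by field_simp
      linarith
    by_contra hD
    push_neg at hD
    have := key (-D/2) (by linarith)
    linarith

lemma expand_norm {n : ℕ} (x u : E n) (a b : ℝ) :
    ‖a • x + b • u‖^2 = a^2*‖x‖^2 + 2*(a*b)*⟪x,u⟫_ℝ + b^2*‖u‖^2 := by
  rw [norm_add_sq_real, norm_smul, norm_smul, real_inner_smul_left, real_inner_smul_right]
  simp [mul_pow, sq_abs]
  ring

lemma ne_top_of_add_coe_le {a : EReal} {r s : ℝ} (h : a + (r:EReal) ≤ (s:EReal)) : a ≠ ⊤ := by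
  intro h'; rw [h'] at h; simp at h

lemma ereal_real_of {a : EReal} (h1 : a ≠ ⊤) (h2 : a ≠ ⊥) : ∃ r : ℝ, a = (r:EReal) :=
  ⟨a.toReal, (EReal.coe_toReal h1 h2).symm⟩

section Bfam
variable {n m : ℕ} (μ : ℝ) (f : E n → EReal) (A : E n →L[ℝ] E m)

lemma B1 (hμ : 0 < μ) (hf : ProperFun f) (hfeas : ∃ x, f x ≠ ⊤)
    (xmin : E m → E n)
    (hx : ∀ y x, f (xmin y) + ((⟪y, A (xmin y)⟫_ℝ : ℝ) : EReal)
        ≤ f x + ((⟪y, A x⟫_ℝ : ℝ) : EReal)) (y : E m) :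
    ∃ F : ℝ, f (xmin y) = (F : EReal) := by
  obtain ⟨x0, hx0⟩ := hfeas
  obtain ⟨X0, hX0⟩ := ereal_real_of hx0 (hf.2 x0)
  have h := hx y x0
  rw [hX0, ← EReal.coe_add] at h
  exact ereal_real_of (ne_top_of_add_coe_le h) (hf.2 _)
end Bfam
section B2sec
variable {n m : ℕ} {μ : ℝ} {f : E n → EReal} {A : E n →L[ℝ] E m}

lemma B2 (hμ : 0 < μ) (hf : ProperFun f) (hsc : StronglyConvexWithMod μ f)
    (hfeas : ∃ x, f x ≠ ⊤) (xmin : E m → E n)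
    (hx : ∀ y x, f (xmin y) + ((⟪y, A (xmin y)⟫_ℝ : ℝ) : EReal)
        ≤ f x + ((⟪y, A x⟫_ℝ : ℝ) : EReal)) (y : E m) (u : E n) :
    f (xmin y) + ((⟪y, A (xmin y)⟫_ℝ + μ/2 * ‖u - xmin y‖^2 : ℝ) : EReal)
      ≤ f u + ((⟪y, A u⟫_ℝ : ℝ) : EReal) := by
  obtain ⟨F, hF⟩ := B1 μ f A hμ hf hfeas xmin hx y
  set x := xmin y with hxdef
  rcases eq_or_ne (f u) ⊤ with hu | hu
  · rw [hu]; simp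
  obtain ⟨U, hU⟩ := ereal_real_of hu (hf.2 u)
  rw [hF, hU, ← EReal.coe_add, ← EReal.coe_add, EReal.coe_le_coe_iff]
  -- real inequality
  have key : ∀ t : ℝ, 0 < t → t ≤ 1 →
      0 ≤ (U + ⟪y, A u⟫_ℝ - F - ⟪y, A x⟫_ℝ - μ/2 * ‖u - x‖^2) + (μ/2 * ‖u - x‖^2) * t := by
    intro t ht ht1
    set mix := (1-t) • x + t • u with hmix
    have hconv := hsc x u (1-t) t (by linarith) (le_of_lt ht) (by ring)
    simp only at hconv
    rw [hF, hU] at hconv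
    rw [show ((F:EReal) - ((μ/2*‖x‖^2 : ℝ):EReal)) = ((F - μ/2*‖x‖^2 : ℝ):EReal) from
        (EReal.coe_sub _ _).symm,
      show ((U:EReal) - ((μ/2*‖u‖^2 : ℝ):EReal)) = ((U - μ/2*‖u‖^2 : ℝ):EReal) from
        (EReal.coe_sub _ _).symm, ← EReal.coe_mul, ← EReal.coe_mul, ← EReal.coe_add] at hconv
    have hmixne : f mix ≠ ⊤ := by
      intro htop
      rw [← hmix, htop, EReal.top_sub_coe] at hconv
      exact absurd hconv (not_le.mpr (EReal.coe_lt_top _))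
    obtain ⟨M, hM⟩ := ereal_real_of hmixne (hf.2 mix)
    rw [← hmix, hM, show ((M:EReal) - ((μ/2*‖mix‖^2 : ℝ):EReal)) = ((M - μ/2*‖mix‖^2 : ℝ):EReal)
        from (EReal.coe_sub _ _).symm, EReal.coe_le_coe_iff] at hconv
    have hxm := hx y mix
    rw [hF, hM, ← EReal.coe_add, ← EReal.coe_add, EReal.coe_le_coe_iff, ← hxdef] at hxm
    have hAmix : ⟪y, A mix⟫_ℝ = (1-t) * ⟪y, A x⟫_ℝ + t * ⟪y, A u⟫_ℝ := by
      rw [hmix, map_add, map_smul, map_smul, inner_add_right, inner_smul_right,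
        inner_smul_right]
    have hnmix : ‖mix‖^2 = (1-t)^2*‖x‖^2 + 2*((1-t)*t)*⟪x,u⟫_ℝ + t^2*‖u‖^2 := by
      rw [hmix]; exact expand_norm x u (1-t) t
    have hnsub : ‖u - x‖^2 = ‖u‖^2 - 2*⟪x,u⟫_ℝ + ‖x‖^2 := by
      rw [norm_sub_sq_real, real_inner_comm]
    rw [hAmix] at hxm
    rw [hnmix] at hconv
    have h2 : t * 0 ≤ t * (U + ⟪y, A u⟫_ℝ - F - ⟪y, A x⟫_ℝ - μ/2 * ‖u - x‖^2 + μ/2 * ‖u - x‖^2 * t) := by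
      rw [hnsub]; nlinarith [hconv, hxm]
    have h3 := le_of_mul_le_mul_left h2 ht
    linarith
  have := aux_limit (by positivity) key
  linarith
end B2sec
section B3sec
variable {n m : ℕ} {μ : ℝ} {f : E n → EReal} {A : E n →L[ℝ] E m}

lemma inner_neg_adj (y : E m) (u : E n) :
    ⟪u, -(ContinuousLinearMap.adjoint A y)⟫_ℝ = -⟪y, A u⟫_ℝ := by
  rw [inner_neg_right, real_inner_comm, ContinuousLinearMap.adjoint_inner_left]

lemma B3 (hf : ProperFun f) {F : ℝ} (xmin : E m → E n)
    (hx : ∀ y x, f (xmin y) + ((⟪y, A (xmin y)⟫_ℝ : ℝ) : EReal)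
        ≤ f x + ((⟪y, A x⟫_ℝ : ℝ) : EReal)) (y : E m) (hF : f (xmin y) = (F : EReal)) :
    conjFn f (-(ContinuousLinearMap.adjoint A y)) = ((-F - ⟪y, A (xmin y)⟫_ℝ : ℝ) : EReal) := by
  apply le_antisymm
  · apply iSup_le
    intro u
    rw [inner_neg_adj]
    rcases eq_or_ne (f u) ⊤ with hu | hu
    · rw [hu]; simp
    obtain ⟨U, hU⟩ := ereal_real_of hu (hf.2 u)
    rw [hU, ← EReal.coe_sub, EReal.coe_le_coe_iff]
    have := hx y u
    rw [hF, hU, ← EReal.coe_add, ← EReal.coe_add, EReal.coe_le_coe_iff] at this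
    linarith
  · have := le_iSup (fun u => ((⟪u, -(ContinuousLinearMap.adjoint A y)⟫_ℝ : ℝ) : EReal) - f u)
      (xmin y)
    rw [inner_neg_adj, hF, ← EReal.coe_sub] at this
    convert this using 2
    ring
    rfl

lemma B4 (hμ : 0 < μ) (hf : ProperFun f) (hsc : StronglyConvexWithMod μ f)
    (hfeas : ∃ x, f x ≠ ⊤) (xmin : E m → E n)
    (hx : ∀ y x, f (xmin y) + ((⟪y, A (xmin y)⟫_ℝ : ℝ) : EReal)
        ≤ f x + ((⟪y, A x⟫_ℝ : ℝ) : EReal)) (y w : E m) {F : ℝ}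
    (hF : f (xmin y) = (F : EReal)) :
    conjFn f (-(ContinuousLinearMap.adjoint A w)) ≤
      ((-F - ⟪w, A (xmin y)⟫_ℝ
        + 1/(2*μ) * ‖ContinuousLinearMap.adjoint A (w - y)‖^2 : ℝ) : EReal) := by
  set x := xmin y with hxdef
  apply iSup_le
  intro u
  rw [inner_neg_adj]
  rcases eq_or_ne (f u) ⊤ with hu | hu
  · rw [hu]; simp
  obtain ⟨U, hU⟩ := ereal_real_of hu (hf.2 u)
  rw [hU, ← EReal.coe_sub, EReal.coe_le_coe_iff]
  have hB2 := B2 hμ hf hsc hfeas xmin hx y u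
  rw [show f (xmin y) = ((F:ℝ):EReal) from hF, hU, ← EReal.coe_add, ← EReal.coe_add,
    EReal.coe_le_coe_iff] at hB2
  rw [← hxdef] at hB2
  -- key inner product identity
  have hid : ⟪y - w, A u⟫_ℝ - ⟪y - w, A x⟫_ℝ = ⟪ContinuousLinearMap.adjoint A (y - w), u - x⟫_ℝ := by
    rw [ContinuousLinearMap.adjoint_inner_left, map_sub, inner_sub_right]
  have hcs := real_inner_le_norm (ContinuousLinearMap.adjoint A (y - w)) (u - x)
  have hnrm : ‖ContinuousLinearMap.adjoint A (y - w)‖ = ‖ContinuousLinearMap.adjoint A (w - y)‖ := by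
    rw [← neg_sub w y, map_neg, norm_neg]
  have hysplit : ⟪y - w, A u⟫_ℝ = ⟪y, A u⟫_ℝ - ⟪w, A u⟫_ℝ := inner_sub_left _ _ _
  have hysplit' : ⟪y - w, A x⟫_ℝ = ⟪y, A x⟫_ℝ - ⟪w, A x⟫_ℝ := inner_sub_left _ _ _
  set b := ContinuousLinearMap.adjoint A (y - w) with hb
  have hbd : ‖b‖ * ‖u - x‖ - μ/2 * ‖u - x‖^2 ≤ 1/(2*μ) * ‖b‖^2 := by
    rw [show (1/(2*μ) * ‖b‖^2) = ‖b‖^2/(2*μ) by ring, le_div_iff₀ (by linarith)]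
    nlinarith [sq_nonneg (‖b‖ - μ * ‖u - x‖)]
  rw [← hnrm]
  linarith [hB2, hcs, hbd]

lemma B5 (hμ : 0 < μ) (hf : ProperFun f) (hsc : StronglyConvexWithMod μ f)
    (hfeas : ∃ x, f x ≠ ⊤) (xmin : E m → E n)
    (hx : ∀ y x, f (xmin y) + ((⟪y, A (xmin y)⟫_ℝ : ℝ) : EReal)
        ≤ f x + ((⟪y, A x⟫_ℝ : ℝ) : EReal)) (y y' : E m) :
    ‖xmin y - xmin y'‖ ≤ ‖A‖ / μ * ‖y - y'‖ := by
  obtain ⟨F, hF⟩ := B1 μ f A hμ hf hfeas xmin hx y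
  obtain ⟨F', hF'⟩ := B1 μ f A hμ hf hfeas xmin hx y'
  have h1 := B2 hμ hf hsc hfeas xmin hx y (xmin y')
  have h2 := B2 hμ hf hsc hfeas xmin hx y' (xmin y)
  rw [hF, hF', ← EReal.coe_add, ← EReal.coe_add, EReal.coe_le_coe_iff] at h1
  rw [hF', hF, ← EReal.coe_add, ← EReal.coe_add, EReal.coe_le_coe_iff] at h2
  have hsum : μ * ‖xmin y - xmin y'‖^2 ≤ ⟪y - y', A (xmin y') - A (xmin y)⟫_ℝ := by
    rw [inner_sub_left, inner_sub_right, inner_sub_right]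
    have hsq : ‖xmin y' - xmin y‖^2 = ‖xmin y - xmin y'‖^2 := by rw [norm_sub_rev]
    rw [hsq] at h1
    linarith [h1, h2]
  have hcs : ⟪y - y', A (xmin y') - A (xmin y)⟫_ℝ ≤ ‖y - y'‖ * (‖A‖ * ‖xmin y' - xmin y‖) := by
    calc ⟪y - y', A (xmin y') - A (xmin y)⟫_ℝ ≤ ‖y - y'‖ * ‖A (xmin y') - A (xmin y)‖ :=
          real_inner_le_norm _ _
    _ ≤ ‖y - y'‖ * (‖A‖ * ‖xmin y' - xmin y‖) := by
        rw [← map_sub]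
        exact mul_le_mul_of_nonneg_left (A.le_opNorm _) (norm_nonneg _)
  rcases eq_or_lt_of_le (norm_nonneg (xmin y - xmin y')) with h0 | h0
  · rw [← h0]; positivity
  · rw [norm_sub_rev (xmin y') (xmin y)] at hcs
    rw [div_mul_eq_mul_div, le_div_iff₀ hμ]
    have hA := norm_nonneg A
    nlinarith [hsum, hcs]
end B3sec
section Csec
variable {m : ℕ} {γ : ℝ} {g : E m → EReal}

lemma C1 (hg : ProperFun g) {v z : E m} (hprox : IsProx γ⁻¹ g v z) :
    ∃ G : ℝ, g z = (G : EReal) := by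
  obtain ⟨w0, hw0⟩ := hg.1
  obtain ⟨W0, hW0⟩ := ereal_real_of hw0 (hg.2 w0)
  have h := hprox w0
  rw [hW0, ← EReal.coe_add] at h
  refine ereal_real_of ?_ (hg.2 z)
  intro htop
  rw [htop, EReal.top_add_coe] at h
  exact absurd h (not_le.mpr (EReal.coe_lt_top _))

lemma C2 (hγ : 0 < γ) (hg : ProperFun g) (hgc : EConvexOn g) {v z : E m}
    (hprox : IsProx γ⁻¹ g v z) (w : E m) :
    g z + ((γ * ⟪v - z, w - z⟫_ℝ : ℝ) : EReal) ≤ g w := by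
  obtain ⟨G, hG⟩ := C1 hg hprox
  rcases eq_or_ne (g w) ⊤ with hw | hw
  · rw [hw]; exact le_top
  obtain ⟨W, hW⟩ := ereal_real_of hw (hg.2 w)
  rw [hG, hW, ← EReal.coe_add, EReal.coe_le_coe_iff]
  have hc0 : 1/(2*γ⁻¹) = γ/2 := by field_simp
  have key : ∀ t : ℝ, 0 < t → t ≤ 1 →
      0 ≤ (W - G + γ * ⟪z - v, w - z⟫_ℝ) + (γ/2 * ‖w - z‖^2) * t := by
    intro t ht ht1
    set mix := (1-t) • z + t • w with hmix
    have hconv := hgc z w (1-t) t (by linarith) (le_of_lt ht) (by ring)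
    rw [← hmix, hG, hW, ← EReal.coe_mul, ← EReal.coe_mul, ← EReal.coe_add] at hconv
    have hmixne : g mix ≠ ⊤ := by
      intro htop; rw [htop] at hconv
      exact absurd hconv (not_le.mpr (EReal.coe_lt_top _))
    obtain ⟨M, hM⟩ := ereal_real_of hmixne (hg.2 mix)
    rw [hM, EReal.coe_le_coe_iff] at hconv
    have hprx := hprox mix
    rw [hG, hM, ← EReal.coe_add, ← EReal.coe_add, EReal.coe_le_coe_iff, hc0] at hprx
    have hmv : mix - v = (z - v) + t • (w - z) := by
      rw [hmix]; module
    have hnorm : ‖mix - v‖^2 = ‖z - v‖^2 + 2*t*⟪z - v, w - z⟫_ℝ + t^2*‖w - z‖^2 := by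
      rw [hmv, norm_add_sq_real, real_inner_smul_right, norm_smul]
      simp [mul_pow, sq_abs]
      ring
    rw [hnorm] at hprx
    have h2 : t * 0 ≤ t * ((W - G + γ * ⟪z - v, w - z⟫_ℝ) + (γ/2 * ‖w - z‖^2) * t) := by
      nlinarith [hprx, hconv]
    have h3 := le_of_mul_le_mul_left h2 ht
    linarith
  have := aux_limit (by positivity) key
  have hflip : ⟪v - z, w - z⟫_ℝ = -⟪z - v, w - z⟫_ℝ := by
    rw [← neg_sub z v, inner_neg_left]
  rw [hflip]
  linarith

lemma C3 (hg : ProperFun g) {z s : E m} {G : ℝ} (hG : g z = (G : EReal))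
    (hsub : ∀ w, g z + ((⟪s, w - z⟫_ℝ : ℝ) : EReal) ≤ g w) :
    conjFn g s = ((⟪z, s⟫_ℝ - G : ℝ) : EReal) := by
  apply le_antisymm
  · apply iSup_le
    intro w
    rcases eq_or_ne (g w) ⊤ with hw | hw
    · rw [hw]; simp
    obtain ⟨W, hW⟩ := ereal_real_of hw (hg.2 w)
    rw [hW, ← EReal.coe_sub, EReal.coe_le_coe_iff]
    have := hsub w
    rw [hG, hW, ← EReal.coe_add, EReal.coe_le_coe_iff, inner_sub_right] at this
    have hcomm : ⟪s, w⟫_ℝ = ⟪w, s⟫_ℝ := real_inner_comm _ _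
    have hcomm' : ⟪s, z⟫_ℝ = ⟪z, s⟫_ℝ := real_inner_comm _ _
    linarith
  · have := le_iSup (fun w => ((⟪w, s⟫_ℝ : ℝ) : EReal) - g w) z
    rw [hG, ← EReal.coe_sub] at this
    exact this
end Csec

set_option maxHeartbeats 2000000

/-- If the dual objective has a strong local minimum at its minimizer, then so
does the alternating minimization envelope. -/
theorem strong_min_dual_to_strong_min_AME
    {n m : ℕ} (μ γ : ℝ) (hμ : 0 < μ) (hγ : 0 < γ)
    (f : E n → EReal) (g : E m → EReal) (A : E n →L[ℝ] E m)
    (hf : ProperClosedConvex f) (hsc : StronglyConvexWithMod μ f)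
    (hg : ProperClosedConvex g)
    (hfeas : ∃ x, f x ≠ ⊤ ∧ g (A x) ≠ ⊤)
    (xmin : E m → E n)
    (hx : ∀ y x, f (xmin y) + ((⟪y, A (xmin y)⟫_ℝ : ℝ) : EReal)
        ≤ f x + ((⟪y, A x⟫_ℝ : ℝ) : EReal))
    (zmin : E m → E m)
    (hz : ∀ y, IsProx γ⁻¹ g (γ⁻¹ • y + A (xmin y)) (zmin y))
    (hγA : γ < μ / ‖A‖ ^ 2)
    (ystar : E m) (hystar : ∀ w, dualObj f g A ystar ≤ dualObj f g A w)
    (c ε : ℝ) (hc : 0 < c) (hε : 0 < ε)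
    (hstrong : ∀ y : E m, ‖y - ystar‖ ≤ ε →
      dualObj f g A ystar + ((c / 2 * ‖y - ystar‖ ^ 2 : ℝ) : EReal)
        ≤ dualObj f g A y) :
    ∃ c' > (0:ℝ), ∃ ε' > (0:ℝ), ∀ y : E m, ‖y - ystar‖ ≤ ε' →
      AME f g A γ xmin zmin ystar + ((c' / 4 * ‖y - ystar‖ ^ 2 : ℝ) : EReal)
        ≤ AME f g A γ xmin zmin y := by
  have hfe : ∃ x, f x ≠ ⊤ := hfeas.imp fun x h => h.1
  have hA : 0 < ‖A‖ := by
    rcases eq_or_lt_of_le (norm_nonneg A) with h0 | h0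
    · exfalso; rw [← h0] at hγA; norm_num at hγA; linarith
    · exact h0
  have hγA' : γ * ‖A‖ ^ 2 < μ := by
    rw [lt_div_iff₀ (by positivity)] at hγA; linarith [hγA]
  have hL1 : γ * (‖A‖ ^ 2 / μ) < 1 := by
    rw [mul_div_assoc'] at *; rw [div_lt_one hμ]; exact hγA'
  -- named quantities
  set T : E m → E m := fun y => y + γ • (A (xmin y) - zmin y) with hT
  set F : E m → ℝ := fun y => (f (xmin y)).toReal with hFdef
  set G : E m → ℝ := fun y => (g (zmin y)).toReal with hGdef
  have hF : ∀ y, f (xmin y) = ((F y : ℝ) : EReal) := by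
    intro y
    obtain ⟨F0, h0⟩ := B1 μ f A hμ hf.1 hfe xmin hx y
    rw [h0, hFdef]; simp [h0]
  have hG : ∀ y, g (zmin y) = ((G y : ℝ) : EReal) := by
    intro y
    obtain ⟨G0, h0⟩ := C1 hg.1 (hz y)
    rw [h0, hGdef]; simp [h0]
  -- subgradient property of T
  have hsubT : ∀ y w, g (zmin y) + ((⟪T y, w - zmin y⟫_ℝ : ℝ) : EReal) ≤ g w := by
    intro y w
    have h := C2 hγ hg.1 hg.2.2 (hz y) w
    have hTv : T y = γ • (γ⁻¹ • y + A (xmin y) - zmin y) := by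
      rw [hT]
      simp only [smul_sub, smul_add, smul_smul, mul_inv_cancel₀ (ne_of_gt hγ), one_smul]
      module
    have : ⟪T y, w - zmin y⟫_ℝ = γ * ⟪γ⁻¹ • y + A (xmin y) - zmin y, w - zmin y⟫_ℝ := by
      rw [hTv, real_inner_smul_left]
    rw [this]
    exact h
  have hgconj : ∀ y, conjFn g (T y) = ((⟪zmin y, T y⟫_ℝ - G y : ℝ) : EReal) :=
    fun y => C3 hg.1 (hG y) (hsubT y)
  have hfconj : ∀ y, conjFn f (-(ContinuousLinearMap.adjoint A y))
      = ((-(F y) - ⟪y, A (xmin y)⟫_ℝ : ℝ) : EReal) := by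
    intro y
    have := B3 hf.1 xmin hx y (hF y)
    convert this using 2
  -- AME value
  have hAME : ∀ y, AME f g A γ xmin zmin y
      = ((-(F y + G y + ⟪y, A (xmin y) - zmin y⟫_ℝ
          + γ/2 * ‖A (xmin y) - zmin y‖^2) : ℝ) : EReal) := by
    intro y
    unfold AME
    rw [hF y, hG y, ← EReal.coe_add, ← EReal.coe_add, ← EReal.coe_neg, EReal.coe_eq_coe_iff]
    ring
  -- adjoint norm bound
  have hadj : ∀ w : E m, ‖ContinuousLinearMap.adjoint A w‖ ≤ ‖A‖ * ‖w‖ := by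
    intro w
    have h1 : ‖(ContinuousLinearMap.adjoint A : E m →L[ℝ] E n)‖ = ‖A‖ :=
      ContinuousLinearMap.adjoint.norm_map A
    calc ‖ContinuousLinearMap.adjoint A w‖
        ≤ ‖(ContinuousLinearMap.adjoint A : E m →L[ℝ] E n)‖ * ‖w‖ :=
          (ContinuousLinearMap.adjoint A).le_opNorm w
    _ = ‖A‖ * ‖w‖ := by rw [h1]
  -- envelope lower bound
  have hEnv : ∀ y, dualObj f g A (T y)
      + ((γ/2 * (1 - γ * (‖A‖^2/μ)) * ‖A (xmin y) - zmin y‖^2 : ℝ) : EReal)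
      ≤ AME f g A γ xmin zmin y := by
    intro y
    have h1 := B4 hμ hf.1 hsc hfe xmin hx y (T y) (hF y)
    have h2 := hgconj y
    unfold dualObj
    rw [h2, hAME y]
    set u := A (xmin y) - zmin y with hu
    have hTyy : T y - y = γ • u := by rw [hT]; module
    have hadj2 : ‖ContinuousLinearMap.adjoint A (T y - y)‖^2 ≤ γ^2 * (‖A‖^2 * ‖u‖^2) := by
      rw [hTyy, map_smul, norm_smul, Real.norm_eq_abs, abs_of_pos hγ, mul_pow]
      have hsq : ‖(ContinuousLinearMap.adjoint A) u‖^2 ≤ ‖A‖^2 * ‖u‖^2 := by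
        rw [← mul_pow]
        nlinarith [hadj u, norm_nonneg ((ContinuousLinearMap.adjoint A) u), norm_nonneg u,
          norm_nonneg A]
      exact mul_le_mul_of_nonneg_left hsq (sq_nonneg γ)
    have hinner : ⟪T y, A (xmin y)⟫_ℝ - ⟪zmin y, T y⟫_ℝ = ⟪y, u⟫_ℝ + γ * ‖u‖^2 := by
      have hc1 : ⟪zmin y, T y⟫_ℝ = ⟪T y, zmin y⟫_ℝ := real_inner_comm _ _
      have hc2 : ⟪T y, A (xmin y)⟫_ℝ - ⟪T y, zmin y⟫_ℝ = ⟪T y, u⟫_ℝ := by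
        rw [hu, inner_sub_right]
      have hc3 : ⟪T y, u⟫_ℝ = ⟪y, u⟫_ℝ + γ * ‖u‖^2 := by
        have : T y = y + γ • u := by rw [hT]
        rw [this, inner_add_left, real_inner_smul_left, real_inner_self_eq_norm_sq]
      rw [hc1, hc2, hc3]
    calc conjFn f (-(ContinuousLinearMap.adjoint A (T y)))
          + ((⟪zmin y, T y⟫_ℝ - G y : ℝ) : EReal)
          + ((γ/2 * (1 - γ * (‖A‖^2/μ)) * ‖u‖^2 : ℝ) : EReal)
        ≤ ((-(F y) - ⟪T y, A (xmin y)⟫_ℝ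
              + 1/(2*μ) * ‖ContinuousLinearMap.adjoint A (T y - y)‖^2 : ℝ) : EReal)
          + ((⟪zmin y, T y⟫_ℝ - G y : ℝ) : EReal)
          + ((γ/2 * (1 - γ * (‖A‖^2/μ)) * ‖u‖^2 : ℝ) : EReal) := by
          exact add_le_add_left (add_le_add_left h1 _) _
    _ = ((-(F y) - ⟪T y, A (xmin y)⟫_ℝ
              + 1/(2*μ) * ‖ContinuousLinearMap.adjoint A (T y - y)‖^2
            + (⟪zmin y, T y⟫_ℝ - G y)
            + γ/2 * (1 - γ * (‖A‖^2/μ)) * ‖u‖^2 : ℝ) : EReal) := by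
          rw [← EReal.coe_add, ← EReal.coe_add]
    _ ≤ ((-(F y + G y + ⟪y, u⟫_ℝ + γ/2 * ‖u‖^2) : ℝ) : EReal) := by
          rw [EReal.coe_le_coe_iff]
          have hdiv : 1/(2*μ) * ‖ContinuousLinearMap.adjoint A (T y - y)‖^2
              ≤ 1/(2*μ) * (γ^2 * (‖A‖^2 * ‖u‖^2)) :=
            mul_le_mul_of_nonneg_left hadj2 (by positivity)
          have hfld : γ/2 * (1 - γ * (‖A‖^2/μ)) * ‖u‖^2
              = γ/2 * ‖u‖^2 - 1/(2*μ) * (γ^2 * (‖A‖^2 * ‖u‖^2)) + (γ - γ) * ‖u‖^2 := by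
            field_simp
            ring
          linarith [hinner, hdiv, hfld]
  -- T is 2-Lipschitz
  have hzrep : ∀ y, zmin y = A (xmin y) - γ⁻¹ • (T y - y) := by
    intro y
    have h1 : T y - y = γ • (A (xmin y) - zmin y) := by rw [hT]; module
    rw [h1, smul_smul, inv_mul_cancel₀ (ne_of_gt hγ), one_smul]
    module
  have hTlip : ∀ y y', ‖T y - T y'‖ ≤ 2 * ‖y - y'‖ := by
    intro y y'
    have hmono : ⟪T y - T y', zmin y' - zmin y⟫_ℝ ≤ 0 := by
      have h1 := hsubT y (zmin y')
      have h2 := hsubT y' (zmin y)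
      rw [hG y, hG y', ← EReal.coe_add, EReal.coe_le_coe_iff] at h1
      rw [hG y', hG y, ← EReal.coe_add, EReal.coe_le_coe_iff] at h2
      have hneg : ⟪T y', zmin y - zmin y'⟫_ℝ = -⟪T y', zmin y' - zmin y⟫_ℝ := by
        rw [← neg_sub (zmin y') (zmin y), inner_neg_right]
      rw [inner_sub_left]
      linarith [h1, h2, hneg]
    have hzz : zmin y' - zmin y
        = (A (xmin y') - A (xmin y)) - γ⁻¹ • ((T y' - T y) - (y' - y)) := by
      rw [hzrep y, hzrep y']
      module
    set d := T y - T y' with hd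
    have hexp : ⟪d, zmin y' - zmin y⟫_ℝ
        = ⟪d, A (xmin y') - A (xmin y)⟫_ℝ - γ⁻¹ * (⟪d, T y' - T y⟫_ℝ - ⟪d, y' - y⟫_ℝ) := by
      rw [hzz]
      simp only [inner_sub_right, real_inner_smul_right]
    have hexp2 : ⟪d, T y' - T y⟫_ℝ = -‖d‖^2 := by
      rw [← neg_sub (T y) (T y'), inner_neg_right, ← hd, real_inner_self_eq_norm_sq]
    have hflipA : ⟪d, A (xmin y') - A (xmin y)⟫_ℝ = -⟪d, A (xmin y) - A (xmin y')⟫_ℝ := by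
      rw [← neg_sub (A (xmin y)) (A (xmin y')), inner_neg_right]
    have hflipy : ⟪d, y' - y⟫_ℝ = -⟪d, y - y'⟫_ℝ := by
      rw [← neg_sub y y', inner_neg_right]
    have hγγ : γ * γ⁻¹ = 1 := mul_inv_cancel₀ (ne_of_gt hγ)
    have hkey : ‖d‖^2 ≤ γ * ⟪d, A (xmin y) - A (xmin y')⟫_ℝ + ⟪d, y - y'⟫_ℝ := by
      rw [hexp, hexp2, hflipA, hflipy] at hmono
      have h9 := mul_le_mul_of_nonneg_left hmono (le_of_lt hγ)
      rw [mul_zero, mul_sub, ← mul_assoc, hγγ, one_mul] at h9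
      linarith [h9]
    have hx5 := B5 hμ hf.1 hsc hfe xmin hx y y'
    have hcs1 : ⟪d, A (xmin y) - A (xmin y')⟫_ℝ
        ≤ ‖d‖ * (‖A‖ * (‖A‖/μ * ‖y - y'‖)) := by
      calc ⟪d, A (xmin y) - A (xmin y')⟫_ℝ
          ≤ ‖d‖ * ‖A (xmin y) - A (xmin y')‖ := real_inner_le_norm _ _
      _ ≤ ‖d‖ * (‖A‖ * ‖xmin y - xmin y'‖) := by
          rw [← map_sub]
          exact mul_le_mul_of_nonneg_left (A.le_opNorm _) (norm_nonneg _)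
      _ ≤ ‖d‖ * (‖A‖ * (‖A‖/μ * ‖y - y'‖)) := by
          apply mul_le_mul_of_nonneg_left _ (norm_nonneg _)
          exact mul_le_mul_of_nonneg_left hx5 (norm_nonneg A)
    have hcs2 : ⟪d, y - y'⟫_ℝ ≤ ‖d‖ * ‖y - y'‖ := real_inner_le_norm _ _
    rcases eq_or_lt_of_le (norm_nonneg d) with h0 | h0
    · rw [← h0]; positivity
    · have hcoef : γ * (‖A‖ * (‖A‖/μ)) ≤ 1 := by
        rw [show ‖A‖ * (‖A‖/μ) = ‖A‖^2/μ by ring]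
        rw [mul_div_assoc'] at *
        rw [div_le_one hμ]
        linarith [hγA']
      nlinarith [hkey, hcs1, hcs2, h0, norm_nonneg (y - y'),
        mul_le_mul_of_nonneg_right hcoef
          (mul_nonneg (le_of_lt h0) (norm_nonneg (y - y')))]
  -- values at ystar
  have hfst := hfconj ystar
  have hR : dualObj f g A (T ystar)
      = ((-(F (T ystar)) - ⟪T ystar, A (xmin (T ystar))⟫_ℝ
          + (⟪zmin ystar, T ystar⟫_ℝ - G ystar) : ℝ) : EReal) := by
    unfold dualObj
    rw [hfconj (T ystar), hgconj ystar, ← EReal.coe_add]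
  have hgys_ne_top : conjFn g ystar ≠ ⊤ := by
    intro htop
    have h1 := hystar (T ystar)
    rw [hR] at h1
    unfold dualObj at h1
    rw [hfst, htop, EReal.coe_add_top] at h1
    exact absurd h1 (not_le.mpr (EReal.coe_lt_top _))
  have hgys_ne_bot : conjFn g ystar ≠ ⊥ := by
    intro hbot
    have hlb : ((⟪zmin ystar, ystar⟫_ℝ : ℝ) : EReal) - g (zmin ystar) ≤ conjFn g ystar :=
      le_iSup (fun w => ((⟪w, ystar⟫_ℝ : ℝ) : EReal) - g w) (zmin ystar)
    rw [hG ystar, ← EReal.coe_sub, hbot] at hlb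
    exact absurd hlb (not_le.mpr (EReal.bot_lt_coe _))
  obtain ⟨Gs, hGs⟩ := ereal_real_of hgys_ne_top hgys_ne_bot
  have hGslb : ⟪zmin ystar, ystar⟫_ℝ - G ystar ≤ Gs := by
    have hlb : ((⟪zmin ystar, ystar⟫_ℝ : ℝ) : EReal) - g (zmin ystar) ≤ conjFn g ystar :=
      le_iSup (fun w => ((⟪w, ystar⟫_ℝ : ℝ) : EReal) - g w) (zmin ystar)
    rw [hG ystar, ← EReal.coe_sub, hGs, EReal.coe_le_coe_iff] at hlb
    exact hlb
  set P := (-(F ystar) - ⟪ystar, A (xmin ystar)⟫_ℝ) + Gs with hPdef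
  have hP : dualObj f g A ystar = (P : EReal) := by
    unfold dualObj
    rw [hfst, hGs, ← EReal.coe_add]
  have hstar1 : P + γ/2 * (1 - γ*(‖A‖^2/μ)) * ‖A (xmin ystar) - zmin ystar‖^2
      ≤ -(F ystar + G ystar + ⟪ystar, A (xmin ystar) - zmin ystar⟫_ℝ
          + γ/2 * ‖A (xmin ystar) - zmin ystar‖^2) := by
    have h1 := hEnv ystar
    rw [hAME ystar] at h1
    have h2 := hystar (T ystar)
    rw [hP] at h2
    have h3 := le_trans (add_le_add_left h2
      ((γ/2 * (1 - γ*(‖A‖^2/μ)) * ‖A (xmin ystar) - zmin ystar‖^2 : ℝ) : EReal)) h1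
    rw [← EReal.coe_add, EReal.coe_le_coe_iff] at h3
    exact h3
  have hstar2 : -(F ystar + G ystar + ⟪ystar, A (xmin ystar) - zmin ystar⟫_ℝ
        + γ/2 * ‖A (xmin ystar) - zmin ystar‖^2)
      ≤ P - γ/2 * ‖A (xmin ystar) - zmin ystar‖^2 := by
    have hic : ⟪ystar, A (xmin ystar) - zmin ystar⟫_ℝ
        = ⟪ystar, A (xmin ystar)⟫_ℝ - ⟪ystar, zmin ystar⟫_ℝ := inner_sub_right _ _ _
    have hcm : ⟪zmin ystar, ystar⟫_ℝ = ⟪ystar, zmin ystar⟫_ℝ := real_inner_comm _ _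
    rw [hPdef, hic]
    linarith [hGslb, hcm]
  have hdpos : 0 < γ/2 * (1 - γ*(‖A‖^2/μ)) := by nlinarith [hL1, hγ]
  have hu0 : A (xmin ystar) - zmin ystar = 0 := by
    have hnn : 0 ≤ ‖A (xmin ystar) - zmin ystar‖^2 := sq_nonneg _
    have hle : ‖A (xmin ystar) - zmin ystar‖^2 ≤ 0 := by
      by_contra hpos
      push_neg at hpos
      nlinarith [hstar1, hstar2, mul_pos hdpos hpos, mul_pos (half_pos hγ) hpos]
    have h0 := le_antisymm hle hnn
    rwa [pow_eq_zero_iff two_ne_zero, norm_eq_zero] at h0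
  have hTfix : T ystar = ystar := by rw [hT]; simp [hu0]
  have hAMEstar : AME f g A γ xmin zmin ystar = (P : EReal) := by
    rw [hAME ystar, EReal.coe_eq_coe_iff]
    have hs0 : ‖A (xmin ystar) - zmin ystar‖^2 = 0 := by rw [hu0]; simp
    rw [hs0] at hstar1 hstar2 ⊢
    linarith [hstar1, hstar2]
  -- conclusion
  refine ⟨min c ((1 - γ*(‖A‖^2/μ))/γ), lt_min hc (div_pos (by linarith [hL1]) hγ),
    ε/2, by positivity, ?_⟩
  intro y hy
  have hTy : ‖T y - ystar‖ ≤ ε := by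
    calc ‖T y - ystar‖ = ‖T y - T ystar‖ := by rw [hTfix]
    _ ≤ 2 * ‖y - ystar‖ := hTlip y ystar
    _ ≤ ε := by linarith
  have hs := hstrong (T y) hTy
  rw [hP, ← EReal.coe_add] at hs
  have hchain : ((P + c/2 * ‖T y - ystar‖^2
        + γ/2 * (1 - γ*(‖A‖^2/μ)) * ‖A (xmin y) - zmin y‖^2 : ℝ) : EReal)
      ≤ AME f g A γ xmin zmin y := by
    calc ((P + c/2 * ‖T y - ystar‖^2
          + γ/2 * (1 - γ*(‖A‖^2/μ)) * ‖A (xmin y) - zmin y‖^2 : ℝ) : EReal)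
        = ((P + c/2 * ‖T y - ystar‖^2 : ℝ) : EReal)
          + ((γ/2 * (1 - γ*(‖A‖^2/μ)) * ‖A (xmin y) - zmin y‖^2 : ℝ) : EReal) := by
          rw [← EReal.coe_add]
    _ ≤ dualObj f g A (T y)
          + ((γ/2 * (1 - γ*(‖A‖^2/μ)) * ‖A (xmin y) - zmin y‖^2 : ℝ) : EReal) :=
          add_le_add_left hs _
    _ ≤ AME f g A γ xmin zmin y := hEnv y
  rw [hAMEstar, ← EReal.coe_add]
  refine le_trans ?_ hchain
  rw [EReal.coe_le_coe_iff]
  have hTyy : T y - y = γ • (A (xmin y) - zmin y) := by rw [hT]; module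
  have hnTy : ‖T y - y‖^2 = γ^2 * ‖A (xmin y) - zmin y‖^2 := by
    rw [hTyy, norm_smul, Real.norm_eq_abs, abs_of_pos hγ, mul_pow]
  have hpar : ‖y - ystar‖^2 ≤ 2*‖T y - ystar‖^2 + 2*‖T y - y‖^2 := by
    have hdecomp : y - ystar = (T y - ystar) - (T y - y) := by abel
    rw [hdecomp, norm_sub_sq_real]
    nlinarith [abs_real_inner_le_norm (T y - ystar) (T y - y),
      neg_abs_le ⟪T y - ystar, T y - y⟫_ℝ,
      sq_nonneg (‖T y - ystar‖ - ‖T y - y‖), norm_nonneg (T y - ystar), norm_nonneg (T y - y)]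
  set c' := min c ((1 - γ*(‖A‖^2/μ))/γ) with hc'def
  have hc'c : c' ≤ c := min_le_left _ _
  have hc'd : c' ≤ (1 - γ*(‖A‖^2/μ))/γ := min_le_right _ _
  have hc'pos : 0 < c' := lt_min hc (div_pos (by linarith [hL1]) hγ)
  have hq : γ/2 * (1 - γ*(‖A‖^2/μ)) * ‖A (xmin y) - zmin y‖^2
      = (1 - γ*(‖A‖^2/μ))/(2*γ) * ‖T y - y‖^2 := by
    rw [hnTy]
    field_simp
  rw [hq]
  have e1 : c'/2 * ‖T y - ystar‖^2 ≤ c/2 * ‖T y - ystar‖^2 := by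
    nlinarith [sq_nonneg ‖T y - ystar‖, hc'c]
  have e2 : c'/2 * ‖T y - y‖^2 ≤ (1 - γ*(‖A‖^2/μ))/(2*γ) * ‖T y - y‖^2 := by
    have hhalf : c'/2 ≤ (1 - γ*(‖A‖^2/μ))/(2*γ) := by
      rw [show (1 - γ*(‖A‖^2/μ))/(2*γ) = ((1 - γ*(‖A‖^2/μ))/γ)/2 by ring]
      linarith [hc'd]
    nlinarith [sq_nonneg ‖T y - y‖, hhalf]
  have e3 : c'/4 * ‖y - ystar‖^2 ≤ c'/2 * ‖T y - ystar‖^2 + c'/2 * ‖T y - y‖^2 := by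
    have h4 := mul_le_mul_of_nonneg_left hpar (by positivity : (0:ℝ) ≤ c'/4)
    nlinarith [h4]
  linarith [e1, e2, e3]
end
end
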